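/- arXiv:1607.02244 — 2 statements merged into one kernel-verified Lean document; each statement's English description precedes it below -/
import Mathlib

section
/- If E is a horizontal self-affine carpet, then every nonempty vertical slice of E, regarded as a metric subspace of ℝ, is uniformly perfect with constant δ^{−1}·α̲^{−(k+1)}, where k is the smallest nonnegative integer with ᾱ^k < δ. -/
open Set Metric Filter Topology

noncomputable section

/-- The Euclidean plane ℝ². -/
abbrev E2 := EuclideanSpace ℝ (Fin 2)

/-- The vertical line {a} × ℝ in ℝ². -/
def vline (a : ℝ) : Set E2 := {x | x 0 = a}

/-- A horizontal self-affine carpet: an IFS of invertible diagonal affine maps on ℝ²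
satisfying (H1), together with its attractor `E` of diameter 1, satisfying the strong
separation condition and the vertical line condition (H2). -/
structure HorizontalCarpet where
  N : ℕ
  hN : 2 ≤ N
  a1 : Fin N → ℝ
  a2 : Fin N → ℝ
  b1 : Fin N → ℝ
  b2 : Fin N → ℝ
  φ : Fin N → E2 → E2
  hφ : ∀ i x, φ i x = ![a1 i * x 0 + b1 i, a2 i * x 1 + b2 i]
  hH1 : ∀ i, 0 < a2 i ∧ a2 i < a1 i ∧ a1 i < 1
  E : Set E2
  hne : E.Nonempty
  hcomp : IsCompact E
  hinv : E = ⋃ i, φ i '' E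
  hdiam : Metric.diam E = 1
  hssc : ∀ i j, i ≠ j → Disjoint (φ i '' E) (φ j '' E)
  hH2 : ∀ a : ℝ, (vline a ∩ convexHull ℝ E).Nonempty →
    ∃ i j : Fin N, i ≠ j ∧ (vline a ∩ φ i '' (convexHull ℝ E)).Nonempty ∧
      (vline a ∩ φ j '' (convexHull ℝ E)).Nonempty

/-- `η : [0,∞) → [0,∞)` is a homeomorphism (expressed for a function `η : ℝ → ℝ`). -/
def IsHomeoOfIci (η : ℝ → ℝ) : Prop :=
  ∃ e : (Set.Ici (0:ℝ)) ≃ₜ (Set.Ici (0:ℝ)), ∀ x : Set.Ici (0:ℝ), (e x : ℝ) = η x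

/-- `f` is η-quasisymmetric. -/
def IsQuasisymmetric {X Y : Type*} [MetricSpace X] [MetricSpace Y] (η : ℝ → ℝ)
    (f : X → Y) : Prop :=
  ∀ x y z : X, x ≠ z →
    dist (f x) (f y) / dist (f x) (f z) ≤ η (dist x y / dist x z)

/-- `ᾱ = max_i α₁(i)`. -/
def alphaBar (c : HorizontalCarpet) : ℝ := sSup (Set.range c.a1)

/-- `α̲ = min_i α₂(i)`. -/
def alphaLow (c : HorizontalCarpet) : ℝ := sInf (Set.range c.a2)

/-- `δ = min_{i ≠ j} dist(φ_i(E), φ_j(E))`. -/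
def sscGap (c : HorizontalCarpet) : ℝ :=
  sInf {d : ℝ | ∃ i j : Fin c.N, i ≠ j ∧
    ∃ x ∈ c.φ i '' c.E, ∃ y ∈ c.φ j '' c.E, d = dist x y}

/-- The vertical slice `V_{y₁}(E) = {x₂ : (y₁,x₂) ∈ E}`. -/
def vslice (E : Set E2) (y1 : ℝ) : Set ℝ := {x2 : ℝ | (!₂[y1, x2] : E2) ∈ E}

/-- A subset of ℝ is uniformly perfect with constant `D` as a metric subspace of ℝ. -/
def UnifPerfectOn (A : Set ℝ) (D : ℝ) : Prop :=
  ∀ x ∈ A, ∀ r : ℝ, 0 < r → (A \ closedBall x r).Nonempty →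
    ((A ∩ closedBall x r) \ closedBall x (r / D)).Nonempty

/-- The smallest `k ∈ ℕ` with `ᾱ^k < δ`. -/
def kGap (c : HorizontalCarpet) : ℕ := sInf {k : ℕ | alphaBar c ^ k < sscGap c}


-- E2 coordinate/distance helpers
lemma dist_e2 (u v : E2) : dist u v = Real.sqrt ((u 0 - v 0)^2 + (u 1 - v 1)^2) := by
  rw [EuclideanSpace.dist_eq]
  simp [Fin.sum_univ_two, Real.dist_eq, sq_abs]

lemma abs_coord0_le_dist (u v : E2) : |u 0 - v 0| ≤ dist u v := by
  rw [dist_e2, ← Real.sqrt_sq_eq_abs]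
  exact Real.sqrt_le_sqrt (by nlinarith [sq_nonneg (u 1 - v 1)])

lemma abs_coord1_le_dist (u v : E2) : |u 1 - v 1| ≤ dist u v := by
  rw [dist_e2, ← Real.sqrt_sq_eq_abs]
  exact Real.sqrt_le_sqrt (by nlinarith [sq_nonneg (u 0 - v 0)])

lemma dist_le_coords (u v : E2) : dist u v ≤ |u 0 - v 0| + |u 1 - v 1| := by
  rw [dist_e2]
  have h : (u 0 - v 0)^2 + (u 1 - v 1)^2 ≤ (|u 0 - v 0| + |u 1 - v 1|)^2 := by
    have h0 : |u 0 - v 0|^2 = (u 0 - v 0)^2 := sq_abs _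
    have h1 : |u 1 - v 1|^2 = (u 1 - v 1)^2 := sq_abs _
    nlinarith [abs_nonneg (u 0 - v 0), abs_nonneg (u 1 - v 1)]
  calc Real.sqrt ((u 0 - v 0)^2 + (u 1 - v 1)^2) ≤ Real.sqrt ((|u 0 - v 0| + |u 1 - v 1|)^2) :=
        Real.sqrt_le_sqrt h
    _ = |u 0 - v 0| + |u 1 - v 1| := by
        rw [Real.sqrt_sq (by positivity)]

lemma dist_of_eq0 (u v : E2) (h : u 0 = v 0) : dist u v = |u 1 - v 1| := by
  rw [dist_e2, h]
  simp [Real.sqrt_sq_eq_abs]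

namespace CarpetAux

variable (c : HorizontalCarpet)

lemma a2_pos (i : Fin c.N) : 0 < c.a2 i := (c.hH1 i).1
lemma a2_lt_a1 (i : Fin c.N) : c.a2 i < c.a1 i := (c.hH1 i).2.1
lemma a1_lt_one (i : Fin c.N) : c.a1 i < 1 := (c.hH1 i).2.2
lemma a1_pos (i : Fin c.N) : 0 < c.a1 i := (a2_pos c i).trans (a2_lt_a1 c i)
lemma a2_lt_one (i : Fin c.N) : c.a2 i < 1 := (a2_lt_a1 c i).trans (a1_lt_one c i)

lemma finNe : Nonempty (Fin c.N) := ⟨⟨0, by have := c.hN; omega⟩⟩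

/-- The affine map associated to `c.φ i`. -/
noncomputable def aff (i : Fin c.N) : E2 →ᵃ[ℝ] E2 where
  toFun := c.φ i
  linear :=
    { toFun := fun x => !₂[c.a1 i * x 0, c.a2 i * x 1]
      map_add' := fun x y => by
        ext j
        fin_cases j <;> simp [PiLp.add_apply] <;> ring
      map_smul' := fun m x => by
        ext j
        fin_cases j <;> simp [PiLp.smul_apply, smul_eq_mul] <;> ring }
  map_vadd' p v := by
    ext j
    have hv : ∀ (u w : E2) (j : Fin 2), (u +ᵥ w) j = u j + w j := fun _ _ _ => rfl
    fin_cases j <;> simp [c.hφ, hv] <;> ring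

lemma aff_eq (i : Fin c.N) : ⇑(aff c i) = c.φ i := rfl

lemma phi_continuous (i : Fin c.N) : Continuous (c.φ i) := by
  rw [← aff_eq]
  exact (aff c i).continuous_of_finiteDimensional

lemma phi_image_hull (i : Fin c.N) (s : Set E2) :
    c.φ i '' (convexHull ℝ s) = convexHull ℝ (c.φ i '' s) := by
  rw [← aff_eq]
  exact AffineMap.image_convexHull _ _

lemma phi_image_E_subset (i : Fin c.N) : c.φ i '' c.E ⊆ c.E := by
  conv_rhs => rw [c.hinv]
  exact subset_iUnion_of_subset i (subset_refl _)

lemma phi_coord0 (i : Fin c.N) (x : E2) : c.φ i x 0 = c.a1 i * x 0 + c.b1 i := by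
  rw [c.hφ]; simp

lemma phi_coord1 (i : Fin c.N) (x : E2) : c.φ i x 1 = c.a2 i * x 1 + c.b2 i := by
  rw [c.hφ]; simp

end CarpetAux
namespace CarpetAux

variable (c : HorizontalCarpet)

/-- Composition of the IFS maps along a word. -/
def Phi : List (Fin c.N) → E2 → E2
  | [] => id
  | i :: w => c.φ i ∘ Phi w

def A1 (w : List (Fin c.N)) : ℝ := (w.map c.a1).prod
def A2 (w : List (Fin c.N)) : ℝ := (w.map c.a2).prod

@[simp] lemma Phi_nil : Phi c [] = id := rfl
@[simp] lemma Phi_cons (i : Fin c.N) (w : List (Fin c.N)) :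
    Phi c (i :: w) = c.φ i ∘ Phi c w := rfl

lemma Phi_append (u v : List (Fin c.N)) : Phi c (u ++ v) = Phi c u ∘ Phi c v := by
  induction u with
  | nil => simp
  | cons i u ih => simp [Phi, ih, Function.comp_assoc]

@[simp] lemma A1_nil : A1 c [] = 1 := rfl
@[simp] lemma A2_nil : A2 c [] = 1 := rfl
lemma A1_cons (i : Fin c.N) (w) : A1 c (i :: w) = c.a1 i * A1 c w := by simp [A1]
lemma A2_cons (i : Fin c.N) (w) : A2 c (i :: w) = c.a2 i * A2 c w := by simp [A2]
lemma A1_append (u v) : A1 c (u ++ v) = A1 c u * A1 c v := by simp [A1]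
lemma A2_append (u v) : A2 c (u ++ v) = A2 c u * A2 c v := by simp [A2]

lemma A1_pos (w : List (Fin c.N)) : 0 < A1 c w := by
  induction w with
  | nil => norm_num
  | cons i w ih => rw [A1_cons]; exact mul_pos (a1_pos c i) ih

lemma A2_pos (w : List (Fin c.N)) : 0 < A2 c w := by
  induction w with
  | nil => norm_num
  | cons i w ih => rw [A2_cons]; exact mul_pos (a2_pos c i) ih

lemma A1_le_one (w : List (Fin c.N)) : A1 c w ≤ 1 := by
  induction w with
  | nil => norm_num
  | cons i w ih =>
      rw [A1_cons]
      nlinarith [a1_pos c i, a1_lt_one c i, A1_pos c w]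

lemma Phi_sub0 (w : List (Fin c.N)) (x y : E2) :
    Phi c w x 0 - Phi c w y 0 = A1 c w * (x 0 - y 0) := by
  induction w with
  | nil => simp
  | cons i w ih =>
      simp only [Phi_cons, Function.comp_apply, phi_coord0, A1_cons]
      rw [show c.a1 i * Phi c w x 0 + c.b1 i - (c.a1 i * Phi c w y 0 + c.b1 i)
            = c.a1 i * (Phi c w x 0 - Phi c w y 0) by ring, ih]
      ring

lemma Phi_sub1 (w : List (Fin c.N)) (x y : E2) :
    Phi c w x 1 - Phi c w y 1 = A2 c w * (x 1 - y 1) := by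
  induction w with
  | nil => simp
  | cons i w ih =>
      simp only [Phi_cons, Function.comp_apply, phi_coord1, A2_cons]
      rw [show c.a2 i * Phi c w x 1 + c.b2 i - (c.a2 i * Phi c w y 1 + c.b2 i)
            = c.a2 i * (Phi c w x 1 - Phi c w y 1) by ring, ih]
      ring

lemma Phi_continuous (w : List (Fin c.N)) : Continuous (Phi c w) := by
  induction w with
  | nil => exact continuous_id
  | cons i w ih => exact (phi_continuous c i).comp ih

lemma Phi_image_E_subset (w : List (Fin c.N)) : Phi c w '' c.E ⊆ c.E := by
  induction w with
  | nil => simp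
  | cons i w ih =>
      rw [Phi_cons, Set.image_comp]
      exact (Set.image_mono ih).trans (phi_image_E_subset c i)

/-- The compact "hull" `K`: closure of the convex hull of `E`. -/
def K : Set E2 := closure (convexHull ℝ c.E)

lemma hull_subset_K : convexHull ℝ c.E ⊆ K c := subset_closure

lemma E_subset_K : c.E ⊆ K c := (subset_convexHull ℝ c.E).trans (hull_subset_K c)

lemma K_compact : IsCompact (K c) :=
  Metric.isCompact_of_isClosed_isBounded isClosed_closure
    ((isBounded_convexHull.mpr c.hcomp.isBounded).closure)

lemma K_diam : Metric.diam (K c) = 1 := by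
  rw [K, Metric.diam_closure, convexHull_diam, c.hdiam]

lemma dist_le_one_of_mem_K {u v : E2} (hu : u ∈ K c) (hv : v ∈ K c) : dist u v ≤ 1 := by
  have := Metric.dist_le_diam_of_mem (K_compact c).isBounded hu hv
  rwa [K_diam c] at this

lemma phi_image_K_subset (i : Fin c.N) : c.φ i '' K c ⊆ K c := by
  have h1 : c.φ i '' K c ⊆ closure (c.φ i '' convexHull ℝ c.E) :=
    image_closure_subset_closure_image (phi_continuous c i)
  refine h1.trans ?_
  rw [phi_image_hull]
  exact closure_mono ((convexHull_mono (phi_image_E_subset c i)).trans le_rfl)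

end CarpetAux
namespace CarpetAux

variable (c : HorizontalCarpet)

lemma alphaLow_mem : alphaLow c ∈ Set.range c.a2 := by
  haveI := finNe c
  exact (Set.range_nonempty c.a2).csInf_mem (Set.finite_range c.a2)

lemma alphaLow_pos : 0 < alphaLow c := by
  obtain ⟨i, hi⟩ := alphaLow_mem c
  rw [← hi]; exact a2_pos c i

lemma alphaLow_le_one : alphaLow c ≤ 1 := by
  obtain ⟨i, hi⟩ := alphaLow_mem c
  rw [← hi]; exact (a2_lt_one c i).le

lemma alphaLow_le (i : Fin c.N) : alphaLow c ≤ c.a2 i :=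
  csInf_le (Set.Finite.bddBelow (Set.finite_range c.a2)) ⟨i, rfl⟩

lemma a1_le_alphaBar (i : Fin c.N) : c.a1 i ≤ alphaBar c :=
  le_csSup (Set.Finite.bddAbove (Set.finite_range c.a1)) ⟨i, rfl⟩

lemma alphaBar_mem : alphaBar c ∈ Set.range c.a1 := by
  haveI := finNe c
  exact (Set.range_nonempty c.a1).csSup_mem (Set.finite_range c.a1)

lemma alphaBar_lt_one : alphaBar c < 1 := by
  obtain ⟨i, hi⟩ := alphaBar_mem c
  rw [← hi]; exact a1_lt_one c i

lemma alphaBar_nonneg : 0 ≤ alphaBar c := by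
  obtain ⟨i, hi⟩ := alphaBar_mem c
  rw [← hi]; exact (a1_pos c i).le

/-- maximum of the `a2`. -/
noncomputable def maxA2 : ℝ := sSup (Set.range c.a2)

lemma a2_le_maxA2 (i : Fin c.N) : c.a2 i ≤ maxA2 c :=
  le_csSup (Set.Finite.bddAbove (Set.finite_range c.a2)) ⟨i, rfl⟩

lemma maxA2_mem : maxA2 c ∈ Set.range c.a2 := by
  haveI := finNe c
  exact (Set.range_nonempty c.a2).csSup_mem (Set.finite_range c.a2)

lemma maxA2_lt_one : maxA2 c < 1 := by
  obtain ⟨i, hi⟩ := maxA2_mem c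
  rw [← hi]; exact a2_lt_one c i

lemma maxA2_nonneg : 0 ≤ maxA2 c := by
  obtain ⟨i, hi⟩ := maxA2_mem c
  rw [← hi]; exact (a2_pos c i).le

lemma A1_le_pow (w : List (Fin c.N)) : A1 c w ≤ alphaBar c ^ w.length := by
  induction w with
  | nil => simp
  | cons i w ih =>
      rw [A1_cons, List.length_cons, pow_succ]
      rw [mul_comm (alphaBar c ^ w.length) (alphaBar c)]
      exact mul_le_mul (a1_le_alphaBar c i) ih (A1_pos c w).le (alphaBar_nonneg c)

lemma A2_le_pow (w : List (Fin c.N)) : A2 c w ≤ maxA2 c ^ w.length := by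
  induction w with
  | nil => simp
  | cons i w ih =>
      rw [A2_cons, List.length_cons, pow_succ]
      rw [mul_comm (maxA2 c ^ w.length) (maxA2 c)]
      exact mul_le_mul (a2_le_maxA2 c i) ih (A2_pos c w).le (maxA2_nonneg c)

/-- the set of distances defining `sscGap`. -/
lemma sscGap_bddBelow : BddBelow {d : ℝ | ∃ i j : Fin c.N, i ≠ j ∧
    ∃ x ∈ c.φ i '' c.E, ∃ y ∈ c.φ j '' c.E, d = dist x y} :=
  ⟨0, fun d ⟨_, _, _, _, _, _, _, hd⟩ => hd ▸ dist_nonneg⟩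

lemma sscGap_le {i j : Fin c.N} (hij : i ≠ j) {x y : E2}
    (hx : x ∈ c.φ i '' c.E) (hy : y ∈ c.φ j '' c.E) : sscGap c ≤ dist x y :=
  csInf_le (sscGap_bddBelow c) ⟨i, j, hij, x, hx, y, hy, rfl⟩

lemma pair_dist_pos (i j : Fin c.N) (hij : i ≠ j) :
    ∃ ε > 0, ∀ x ∈ c.φ i '' c.E, ∀ y ∈ c.φ j '' c.E, ε ≤ dist x y := by
  have hKi : IsCompact (c.φ i '' c.E) := c.hcomp.image (phi_continuous c i)
  have hKj : IsCompact (c.φ j '' c.E) := c.hcomp.image (phi_continuous c j)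
  have hKine : (c.φ i '' c.E).Nonempty := c.hne.image _
  have hKjne : (c.φ j '' c.E).Nonempty := c.hne.image _
  obtain ⟨x0, hx0, hmin⟩ := hKi.exists_isMinOn hKine
    (continuous_infDist_pt (c.φ j '' c.E)).continuousOn
  refine ⟨Metric.infDist x0 (c.φ j '' c.E), ?_, ?_⟩
  · exact (hKj.isClosed.notMem_iff_infDist_pos hKjne).mp
      (fun hmem => Set.disjoint_left.mp (c.hssc i j hij) hx0 hmem)
  · intro x hx y hy
    calc Metric.infDist x0 (c.φ j '' c.E) ≤ Metric.infDist x (c.φ j '' c.E) := hmin hx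
      _ ≤ dist x y := Metric.infDist_le_dist_of_mem hy

lemma sscGap_pos : 0 < sscGap c := by
  classical
  haveI := finNe c
  choose! ε hεpos hεle using fun (p : Fin c.N × Fin c.N) (h : p.1 ≠ p.2) =>
    pair_dist_pos c p.1 p.2 h
  set ε' : Fin c.N × Fin c.N → ℝ := fun p => if h : p.1 ≠ p.2 then ε p else 1 with hε'
  have hne' : (Finset.univ : Finset (Fin c.N × Fin c.N)).Nonempty := Finset.univ_nonempty
  have hpos : 0 < Finset.univ.inf' hne' ε' := by
    rw [Finset.lt_inf'_iff]
    intro p _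
    by_cases h : p.1 ≠ p.2
    · simp only [hε', dif_pos h]; exact hεpos p h
    · simp only [hε', dif_neg h]; norm_num
  refine lt_of_lt_of_le hpos (le_csInf ?_ ?_)
  · obtain ⟨e, he⟩ := c.hne
    have h2 : (2 : ℕ) ≤ c.N := c.hN
    have hij : (⟨0, by omega⟩ : Fin c.N) ≠ (⟨1, by omega⟩ : Fin c.N) := by
      intro hcon
      have := congrArg Fin.val hcon
      simp at this
    exact ⟨_, ⟨⟨0, by omega⟩, ⟨1, by omega⟩, hij,
      _, ⟨e, he, rfl⟩, _, ⟨e, he, rfl⟩, rfl⟩⟩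
  · rintro d ⟨i, j, hij, x, hx, y, hy, rfl⟩
    calc Finset.univ.inf' hne' ε' ≤ ε' (i, j) := Finset.inf'_le _ (Finset.mem_univ _)
      _ ≤ dist x y := by
          simp only [hε', dif_pos (show (i,j).1 ≠ (i,j).2 from hij)]
          exact hεle (i,j) hij x hx y hy

end CarpetAux
namespace CarpetAux

variable (c : HorizontalCarpet)

lemma proj0_image_hull :
    (EuclideanSpace.proj (0 : Fin 2) : E2 →L[ℝ] ℝ) '' (convexHull ℝ c.E)
      = convexHull ℝ ((EuclideanSpace.proj (0 : Fin 2) : E2 →L[ℝ] ℝ) '' c.E) := by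
  exact (EuclideanSpace.projₗ (0 : Fin 2) : E2 →ₗ[ℝ] ℝ).image_convexHull c.E

/-- If the vertical line meets `K`, it meets the convex hull of `E`. -/
lemma vline_K_to_hull {a : ℝ} (h : (vline a ∩ K c).Nonempty) :
    (vline a ∩ convexHull ℝ c.E).Nonempty := by
  classical
  obtain ⟨z, hz0, hzK⟩ := h
  set π : E2 →L[ℝ] ℝ := EuclideanSpace.proj (0 : Fin 2) with hπ
  have hπ_apply : ∀ u : E2, π u = u 0 := fun u => rfl
  obtain ⟨xm, hxmE, hxm⟩ := c.hcomp.exists_isMinOn c.hne π.continuous.continuousOn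
  obtain ⟨xM, hxME, hxM⟩ := c.hcomp.exists_isMaxOn c.hne π.continuous.continuousOn
  set m := xm 0
  set M := xM 0
  have himg : π '' (convexHull ℝ c.E) = Set.Icc m M := by
    apply Set.Subset.antisymm
    · rw [proj0_image_hull]
      apply convexHull_min _ (convex_Icc m M)
      rintro t ⟨u, huE, rfl⟩
      exact ⟨hxm huE, hxM huE⟩
    · rintro t ⟨htm, htM⟩
      by_cases hMm : M = m
      · refine ⟨xm, subset_convexHull ℝ c.E hxmE, ?_⟩
        rw [hπ_apply]
        have : t ≤ m := hMm ▸ htM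
        linarith
      · have hlt : m < M := lt_of_le_of_ne (le_trans htm htM) (Ne.symm hMm)
        set θ := (t - m) / (M - m) with hθ
        have hθ0 : 0 ≤ θ := div_nonneg (by linarith) (by linarith)
        have hθ1 : θ ≤ 1 := by
          rw [div_le_one (by linarith)]; linarith
        refine ⟨(1 - θ) • xm + θ • xM, ?_, ?_⟩
        · exact (convex_convexHull ℝ c.E) (subset_convexHull ℝ c.E hxmE)
            (subset_convexHull ℝ c.E hxME) (by linarith) hθ0 (by ring)
        · rw [hπ_apply]
          have : ((1 - θ) • xm + θ • xM) 0 = (1 - θ) * xm 0 + θ * xM 0 := rfl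
          rw [this]
          have hne : M - m ≠ 0 := by linarith
          have hcancel : θ * (M - m) = t - m := div_mul_cancel₀ _ hne
          linear_combination hcancel
  have hz0Icc : z 0 ∈ Set.Icc m M := by
    have h1 : π z ∈ π '' (closure (convexHull ℝ c.E)) := ⟨z, hzK, rfl⟩
    have h2 : π '' (closure (convexHull ℝ c.E)) ⊆ closure (π '' (convexHull ℝ c.E)) :=
      image_closure_subset_closure_image π.continuous
    have h3 := h2 h1
    rw [himg, IsClosed.closure_eq isClosed_Icc] at h3
    exact h3
  have : z 0 ∈ π '' (convexHull ℝ c.E) := himg ▸ hz0Icc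
  obtain ⟨u, huH, hu0⟩ := this
  refine ⟨u, ?_, huH⟩
  show u 0 = a
  have : u 0 = π u := rfl
  rw [this, hu0]
  exact hz0

end CarpetAux
namespace CarpetAux

variable (c : HorizontalCarpet)

lemma A2_le_A1 (w : List (Fin c.N)) : A2 c w ≤ A1 c w := by
  induction w with
  | nil => norm_num
  | cons i w ih =>
      rw [A2_cons, A1_cons]
      exact mul_le_mul (a2_lt_a1 c i).le ih (A2_pos c w).le (a1_pos c i).le

lemma append_one_image (v : List (Fin c.N)) (i : Fin c.N) (s : Set E2) :
    Phi c (v ++ [i]) '' s = Phi c v '' (c.φ i '' s) := by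
  rw [Phi_append, Set.image_comp]
  congr 1

lemma Phi_image_K_subset (w : List (Fin c.N)) : Phi c w '' K c ⊆ K c := by
  induction w with
  | nil => simp
  | cons i w ih =>
      rw [Phi_cons, Set.image_comp]
      exact (Set.image_mono ih).trans (phi_image_K_subset c i)

lemma vline_closed (a : ℝ) : IsClosed (vline a) := by
  have : vline a = (fun u : E2 => u 0) ⁻¹' {a} := rfl
  rw [this]
  exact IsClosed.preimage (EuclideanSpace.proj (0 : Fin 2)).continuous isClosed_singleton

lemma step (y1 : ℝ) (v : List (Fin c.N)) (hv : (vline y1 ∩ Phi c v '' K c).Nonempty) :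
    ∃ i : Fin c.N, (vline y1 ∩ Phi c (v ++ [i]) '' K c).Nonempty := by
  obtain ⟨q, hq0, z, hzK, hqz⟩ := hv
  have h1 : (vline (z 0) ∩ convexHull ℝ c.E).Nonempty :=
    vline_K_to_hull c ⟨z, rfl, hzK⟩
  obtain ⟨i, j, hij, ⟨z', hz'0, hz'mem⟩, -⟩ := c.hH2 (z 0) h1
  obtain ⟨u, huH, huz'⟩ := hz'mem
  refine ⟨i, Phi c v z', ?_, ?_⟩
  · show Phi c v z' 0 = y1
    have hsub := Phi_sub0 c v z' z
    have hz'0' : z' 0 = z 0 := hz'0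
    rw [hz'0', sub_self, mul_zero, sub_eq_zero] at hsub
    rw [hsub, hqz]
    exact hq0
  · rw [append_one_image]
    exact ⟨z', ⟨u, hull_subset_K c huH, huz'⟩, rfl⟩

lemma line_meets_E (y1 : ℝ) (w : List (Fin c.N))
    (hw : (vline y1 ∩ Phi c w '' K c).Nonempty) :
    (vline y1 ∩ Phi c w '' c.E).Nonempty := by
  classical
  have hstep : ∀ v : {v : List (Fin c.N) // (vline y1 ∩ Phi c v '' K c).Nonempty},
      ∃ i, (vline y1 ∩ Phi c (v.1 ++ [i]) '' K c).Nonempty :=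
    fun v => step c y1 v.1 v.2
  choose st hst using hstep
  set f : {v : List (Fin c.N) // (vline y1 ∩ Phi c v '' K c).Nonempty} →
      {v : List (Fin c.N) // (vline y1 ∩ Phi c v '' K c).Nonempty} :=
    fun v => ⟨v.1 ++ [st v], hst v⟩ with hf
  set u : ℕ → {v : List (Fin c.N) // (vline y1 ∩ Phi c v '' K c).Nonempty} :=
    fun n => f^[n] ⟨w, hw⟩ with hu
  have hu_succ : ∀ n, u (n+1) = f (u n) := fun n => Function.iterate_succ_apply' f n _
  have hu0 : u 0 = ⟨w, hw⟩ := rfl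
  have hlen : ∀ n, (u n).1.length = w.length + n := by
    intro n
    induction n with
    | zero => simp [hu0]
    | succ n ih => rw [hu_succ]; simp [hf, ih]; ring
  have hsubE : ∀ n, Phi c (u n).1 '' c.E ⊆ Phi c w '' c.E := by
    intro n
    induction n with
    | zero => rw [hu0]
    | succ n ih =>
        rw [hu_succ]
        show Phi c ((u n).1 ++ [st (u n)]) '' c.E ⊆ _
        rw [append_one_image]
        exact ((Set.image_mono (phi_image_E_subset c _)).trans ih)
  set S : ℕ → Set E2 := fun n => vline y1 ∩ Phi c (u n).1 '' K c with hS
  have hS_ne : ∀ n, (S n).Nonempty := fun n => (u n).2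
  have hS_closed : ∀ n, IsClosed (S n) := fun n =>
    (vline_closed y1).inter ((K_compact c).image (Phi_continuous c _)).isClosed
  have hS_dec : ∀ n, S (n+1) ⊆ S n := by
    intro n
    apply Set.inter_subset_inter_right
    rw [hu_succ]
    show Phi c ((u n).1 ++ [st (u n)]) '' K c ⊆ _
    rw [append_one_image]
    exact Set.image_mono (phi_image_K_subset c _)
  have hS0 : IsCompact (S 0) :=
    IsCompact.of_isClosed_subset ((K_compact c).image (Phi_continuous c _))
      (hS_closed 0) Set.inter_subset_right
  obtain ⟨p, hp⟩ :=
    IsCompact.nonempty_iInter_of_sequence_nonempty_isCompact_isClosed S hS_dec hS_ne hS0 hS_closed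
  have hpn : ∀ n, p ∈ S n := fun n => Set.mem_iInter.mp hp n
  refine ⟨p, (hpn 0).1, ?_⟩
  have hclosed : IsClosed (Phi c w '' c.E) := (c.hcomp.image (Phi_continuous c w)).isClosed
  rw [← hclosed.closure_eq]
  rw [Metric.mem_closure_iff]
  intro ε hε
  have htend : Filter.Tendsto (fun n => 2 * alphaBar c ^ n) Filter.atTop (nhds 0) := by
    have := (tendsto_pow_atTop_nhds_zero_of_lt_one (alphaBar_nonneg c)
      (alphaBar_lt_one c)).const_mul (2 : ℝ)
    simpa using this
  obtain ⟨n, hn⟩ := (htend.eventually (gt_mem_nhds hε)).exists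
  obtain ⟨t, htK, htp⟩ := (hpn n).2
  obtain ⟨e0, he0⟩ := c.hne
  refine ⟨Phi c (u n).1 e0, hsubE n ⟨e0, he0, rfl⟩, ?_⟩
  rw [← htp]
  have he0K : e0 ∈ K c := E_subset_K c he0
  have hb0 : |t 0 - e0 0| ≤ 1 := (abs_coord0_le_dist t e0).trans (dist_le_one_of_mem_K c htK he0K)
  have hb1 : |t 1 - e0 1| ≤ 1 := (abs_coord1_le_dist t e0).trans (dist_le_one_of_mem_K c htK he0K)
  have hA1pos := A1_pos c (u n).1
  have hA2pos := A2_pos c (u n).1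
  calc dist (Phi c (u n).1 t) (Phi c (u n).1 e0)
      ≤ |Phi c (u n).1 t 0 - Phi c (u n).1 e0 0| + |Phi c (u n).1 t 1 - Phi c (u n).1 e0 1| :=
        dist_le_coords _ _
    _ = A1 c (u n).1 * |t 0 - e0 0| + A2 c (u n).1 * |t 1 - e0 1| := by
        rw [Phi_sub0, Phi_sub1, abs_mul, abs_mul, abs_of_pos hA1pos, abs_of_pos hA2pos]
    _ ≤ A1 c (u n).1 * 1 + A1 c (u n).1 * 1 := by
        have := A2_le_A1 c (u n).1
        have h1 : A1 c (u n).1 * |t 0 - e0 0| ≤ A1 c (u n).1 * 1 :=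
          mul_le_mul_of_nonneg_left hb0 hA1pos.le
        have h2 : A2 c (u n).1 * |t 1 - e0 1| ≤ A1 c (u n).1 * 1 := by
          calc A2 c (u n).1 * |t 1 - e0 1| ≤ A2 c (u n).1 * 1 :=
                mul_le_mul_of_nonneg_left hb1 hA2pos.le
            _ ≤ A1 c (u n).1 * 1 := by linarith
        linarith
    _ = 2 * A1 c (u n).1 := by ring
    _ ≤ 2 * alphaBar c ^ n := by
        have h3 : A1 c (u n).1 ≤ alphaBar c ^ (u n).1.length := A1_le_pow c _
        have h4 : alphaBar c ^ (u n).1.length ≤ alphaBar c ^ n := by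
          rw [hlen n]
          exact pow_le_pow_of_le_one (alphaBar_nonneg c) (alphaBar_lt_one c).le (by omega)
        linarith
    _ < ε := hn

end CarpetAux

open CarpetAux in
/-- Lemma 5.4 (uniform perfectness part): every nonempty vertical slice of a horizontal
self-affine carpet is uniformly perfect with constant `δ⁻¹ α̲^{-(k+1)}`, where `k` is
the smallest nonnegative integer with `ᾱ^k < δ`. -/
theorem statement12 (c : HorizontalCarpet) (y1 : ℝ) (h : (vslice c.E y1).Nonempty) :
    UnifPerfectOn (vslice c.E y1) ((sscGap c)⁻¹ * ((alphaLow c)⁻¹) ^ (kGap c + 1)) := by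
  classical
  intro x2 hx2 r hr hout
  set D := (sscGap c)⁻¹ * ((alphaLow c)⁻¹) ^ (kGap c + 1) with hD
  set x : E2 := !₂[y1, x2] with hxdef
  have hxE : x ∈ c.E := hx2
  have hx0 : x 0 = y1 := by simp [hxdef]
  have hx1 : x 1 = x2 := by simp [hxdef]
  have hδpos := sscGap_pos c
  have hαpos := alphaLow_pos c
  -- `r < 1`
  obtain ⟨t0, ht0A, ht0out⟩ := hout
  have ht0E : (!₂[y1, t0] : E2) ∈ c.E := ht0A
  have hr1 : r < 1 := by
    set xt : E2 := !₂[y1, t0] with hxt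
    have hd : dist xt x ≤ 1 :=
      le_trans (Metric.dist_le_diam_of_mem c.hcomp.isBounded ht0E hxE) (le_of_eq c.hdiam)
    have heq : dist xt x = |t0 - x2| := by
      rw [dist_of_eq0 xt x (by simp [hxt, hxdef])]
      simp [hxt, hxdef]
    have hgt : r < dist t0 x2 := by
      by_contra hcon
      push_neg at hcon
      exact ht0out (Metric.mem_closedBall.mpr hcon)
    rw [Real.dist_eq] at hgt
    rw [heq] at hd
    linarith
  -- the coding sequence of `x`
  have hstep : ∀ z ∈ c.E, ∃ (i : Fin c.N), ∃ z' ∈ c.E, c.φ i z' = z := by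
    intro z hz
    rw [c.hinv] at hz
    simp only [Set.mem_iUnion, Set.mem_image] at hz
    obtain ⟨i, z', hz', hφz⟩ := hz
    exact ⟨i, z', hz', hφz⟩
  haveI := finNe c
  choose! I P hPE hPeq using hstep
  set p : ℕ → E2 := fun n => P^[n] x with hp
  have hpsucc : ∀ n, p (n+1) = P (p n) := fun n => Function.iterate_succ_apply' P n x
  have hp0 : p 0 = x := rfl
  have hpE : ∀ n, p n ∈ c.E := by
    intro n
    induction n with
    | zero => exact hxE
    | succ n ih => rw [hpsucc]; exact hPE _ ih
  set idx : ℕ → Fin c.N := fun n => I (p n) with hidx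
  set word : ℕ → List (Fin c.N) := fun n => (List.range n).map idx with hword
  have hword0 : word 0 = [] := by simp [hword]
  have hwordsucc : ∀ n, word (n+1) = word n ++ [idx n] := by
    intro n; simp [hword, List.range_succ]
  have hxeq : ∀ n, Phi c (word n) (p n) = x := by
    intro n
    induction n with
    | zero => rw [hword0, hp0]; rfl
    | succ n ih =>
        rw [hwordsucc, Phi_append]
        show Phi c (word n) (Phi c [idx n] (p (n+1))) = x
        have h1 : Phi c [idx n] (p (n+1)) = c.φ (idx n) (p (n+1)) := rfl
        rw [h1, hpsucc]
        show Phi c (word n) (c.φ (I (p n)) (P (p n))) = x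
        rw [hPeq _ (hpE n)]
        exact ih
  -- minimal `n` with `A2 (word n) ≤ r`
  have hex : ∃ n, A2 c (word n) ≤ r := by
    have htend : Filter.Tendsto (fun n => maxA2 c ^ n) Filter.atTop (nhds 0) :=
      tendsto_pow_atTop_nhds_zero_of_lt_one (maxA2_nonneg c) (maxA2_lt_one c)
    obtain ⟨n, hn⟩ := (htend.eventually (gt_mem_nhds hr)).exists
    refine ⟨n, le_of_lt (lt_of_le_of_lt ?_ hn)⟩
    have h2 := A2_le_pow c (word n)
    rwa [show (word n).length = n by simp [hword]] at h2
  obtain ⟨n, hle, hmin⟩ : ∃ n, A2 c (word n) ≤ r ∧ ∀ m, m < n → r < A2 c (word m) :=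
    ⟨Nat.find hex, Nat.find_spec hex, fun m hm => lt_of_not_ge (Nat.find_min hex hm)⟩
  have hn0 : n ≠ 0 := by
    intro h0
    rw [h0, hword0] at hle
    simp only [A2_nil] at hle
    linarith
  obtain ⟨m, hm⟩ : ∃ m, n = m + 1 := ⟨n - 1, by omega⟩
  have hA2lb : r * alphaLow c < A2 c (word n) := by
    rw [hm, hwordsucc, A2_append]
    have h1 : r < A2 c (word m) := hmin m (by omega)
    have h2 : alphaLow c ≤ c.a2 (idx m) := alphaLow_le c _
    have h3 : A2 c [idx m] = c.a2 (idx m) := by simp [A2]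
    rw [h3]
    nlinarith [a2_pos c (idx m)]
  -- apply (H2) inside the cylinder `word n`
  have hlineK : (vline (p n 0) ∩ convexHull ℝ c.E).Nonempty :=
    ⟨p n, rfl, subset_convexHull ℝ c.E (hpE n)⟩
  obtain ⟨i, j, hij, hiH, hjH⟩ := c.hH2 (p n 0) hlineK
  obtain ⟨cs, hcs_ne, zc, hzc0, hzcmem⟩ :
      ∃ cs : Fin c.N, cs ≠ idx n ∧ ∃ zc, zc ∈ vline (p n 0) ∧
        zc ∈ c.φ cs '' (convexHull ℝ c.E) := by
    by_cases hcase : i = idx n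
    · obtain ⟨zc, h1, h2⟩ := hjH
      exact ⟨j, fun hc => hij (by rw [hcase, hc]), zc, h1, h2⟩
    · obtain ⟨zc, h1, h2⟩ := hiH
      exact ⟨i, hcase, zc, h1, h2⟩
  have hlift : (vline y1 ∩ Phi c (word n ++ [cs]) '' K c).Nonempty := by
    refine ⟨Phi c (word n) zc, ?_, ?_⟩
    · show Phi c (word n) zc 0 = y1
      have hsub := Phi_sub0 c (word n) zc (p n)
      have hzc0' : zc 0 = p n 0 := hzc0
      rw [hzc0', sub_self, mul_zero, sub_eq_zero] at hsub
      rw [hsub, hxeq n]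
      exact hx0
    · rw [append_one_image]
      obtain ⟨uu, huu, huz⟩ := hzcmem
      exact ⟨zc, ⟨uu, hull_subset_K c huu, huz⟩, rfl⟩
  obtain ⟨z, hz0, hzmem⟩ := line_meets_E c y1 _ hlift
  rw [append_one_image] at hzmem
  obtain ⟨s', ⟨s, hsE, hs⟩, hz⟩ := hzmem
  set uu : E2 := c.φ cs s with huudef
  have hz_eq : Phi c (word n) uu = z := by rw [hs]; exact hz
  have huuE : uu ∈ c.E := phi_image_E_subset c cs ⟨s, hsE, rfl⟩
  have hzE : z ∈ c.E := by
    rw [← hz_eq]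
    exact Phi_image_E_subset c (word n) ⟨uu, huuE, rfl⟩
  have hz0' : z 0 = y1 := hz0
  have h0eq : z 0 = x 0 := by rw [hz0', hx0]
  -- coordinate-0 agreement downstairs
  have hcoord0 : uu 0 = p n 0 := by
    have hsub := Phi_sub0 c (word n) uu (p n)
    rw [hz_eq, hxeq n] at hsub
    rw [h0eq, sub_self] at hsub
    have := (mul_eq_zero.mp hsub.symm).resolve_left (ne_of_gt (A1_pos c (word n)))
    linarith [this]
  -- separation
  have hpn_mem : p n ∈ c.φ (idx n) '' c.E := by
    refine ⟨P (p n), hPE _ (hpE n), ?_⟩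
    show c.φ (I (p n)) (P (p n)) = p n
    exact hPeq _ (hpE n)
  have hdist_uv : sscGap c ≤ dist uu (p n) :=
    sscGap_le c hcs_ne ⟨s, hsE, rfl⟩ hpn_mem
  have hdist_uv1 : dist uu (p n) ≤ 1 := by
    have := Metric.dist_le_diam_of_mem c.hcomp.isBounded huuE (hpE n)
    rwa [c.hdiam] at this
  -- exact distance relation
  have hdist_plane : dist z x = A2 c (word n) * dist uu (p n) := by
    rw [dist_of_eq0 z x h0eq, dist_of_eq0 uu (p n) hcoord0]
    have h1 : z 1 - x 1 = A2 c (word n) * (uu 1 - p n 1) := by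
      rw [← hz_eq, ← hxeq n]
      exact Phi_sub1 c (word n) uu (p n)
    rw [h1, abs_mul, abs_of_pos (A2_pos c (word n))]
  -- the slice point
  set t : ℝ := z 1 with htdef
  have hzx : (!₂[y1, t] : E2) = z := by
    ext jj
    fin_cases jj
    · show y1 = z 0
      exact hz0'.symm
    · rfl
  have htA : t ∈ vslice c.E y1 := by
    show (!₂[y1, t] : E2) ∈ c.E
    rw [hzx]
    exact hzE
  have hdist_t : dist t x2 = dist z x := by
    rw [Real.dist_eq, dist_of_eq0 z x h0eq, hx1, htdef]
  -- upper bound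
  have hub : dist z x ≤ r := by
    rw [hdist_plane]
    calc A2 c (word n) * dist uu (p n) ≤ A2 c (word n) * 1 :=
        mul_le_mul_of_nonneg_left hdist_uv1 (A2_pos c (word n)).le
      _ = A2 c (word n) := mul_one _
      _ ≤ r := hle
  -- lower bound
  have hlb : r / D < dist z x := by
    have hδne : sscGap c ≠ 0 := ne_of_gt hδpos
    have hαne : alphaLow c ≠ 0 := ne_of_gt hαpos
    have hD_inv : r / D = r * (sscGap c * alphaLow c ^ (kGap c + 1)) := by
      rw [hD, div_eq_mul_inv, mul_inv, inv_inv, inv_pow, inv_inv]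
    have hαk : alphaLow c ^ (kGap c + 1) ≤ alphaLow c := by
      calc alphaLow c ^ (kGap c + 1) ≤ alphaLow c ^ 1 :=
            pow_le_pow_of_le_one hαpos.le (alphaLow_le_one c) (by omega)
        _ = alphaLow c := pow_one _
    have hpowpos : 0 < alphaLow c ^ (kGap c + 1) := pow_pos hαpos _
    calc r / D = r * (sscGap c * alphaLow c ^ (kGap c + 1)) := hD_inv
      _ ≤ r * (sscGap c * alphaLow c) := by
          have h5 : sscGap c * alphaLow c ^ (kGap c + 1) ≤ sscGap c * alphaLow c :=
            mul_le_mul_of_nonneg_left hαk hδpos.le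
          exact mul_le_mul_of_nonneg_left h5 hr.le
      _ = (r * alphaLow c) * sscGap c := by ring
      _ < A2 c (word n) * sscGap c := mul_lt_mul_of_pos_right hA2lb hδpos
      _ ≤ A2 c (word n) * dist uu (p n) :=
          mul_le_mul_of_nonneg_left hdist_uv (A2_pos c (word n)).le
      _ = dist z x := hdist_plane.symm
  refine ⟨t, ⟨htA, Metric.mem_closedBall.mpr (by rw [hdist_t]; exact hub)⟩, ?_⟩
  intro hmem
  have := Metric.mem_closedBall.mp hmem
  rw [hdist_t] at this
  linarith
end
end

section
/- Let C_left and C_right be closed subsets of ℝ with no isolated points, and let w ∈ ℝ. Set T_left = C_left \ C_right, T_right = C_right \ C_left, T = C_left ∩ C_right, and S = T \ cl(T_left ∪ T_right), where cl denotes closure in ℝ. Then: (i) T_left, T_right and S have no isolated points; (ii) if T_left ∪ T_right ≠ ∅, then the set (−∞,w] × T_left ∪ [w,∞) × T_right, equipped with the Euclidean metric of ℝ², is a fibered space whose fibers are the sets (−∞,w] × {y} for y ∈ T_left and [w,∞) × {y} for y ∈ T_right; (iii) if S ≠ ∅, then ℝ × S, with the Euclidean metric, is a fibered space whose fibers are the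 sets ℝ × {y} for y ∈ S; (iv) S ∪ T_left ∪ T_right is dense in C_left ∪ C_right. -/
open Set Metric Filter Topology
open scoped NNReal ENNReal

noncomputable section

/-- The (extended, infimal) distance between two subsets of a metric space. -/
def setEDist {X : Type*} [MetricSpace X] (A B : Set X) : ℝ≥0∞ :=
  ⨅ x ∈ A, EMetric.infEdist x B

/-- Two subsets `F`, `G` are parallel: there is `c > 0` with
`dist(y,F) = dist(x,G) = c` for all `x ∈ F`, `y ∈ G`. -/
def AreParallel {X : Type*} [MetricSpace X] (F G : Set X) : Prop :=
  ∃ c : ℝ, 0 < c ∧ (∀ x ∈ F, Metric.infDist x G = c) ∧ (∀ y ∈ G, Metric.infDist y F = c)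

/-- A subset `F` is geodesic: any two of its points are joined by a path inside `F`
whose length equals their distance. -/
def IsGeodesicSet {X : Type*} [MetricSpace X] (F : Set X) : Prop :=
  ∀ x ∈ F, ∀ y ∈ F, ∃ γ : ℝ → X, ContinuousOn γ (Set.Icc 0 1) ∧
    Set.MapsTo γ (Set.Icc 0 1) F ∧ γ 0 = x ∧ γ 1 = y ∧
    eVariationOn γ (Set.Icc 0 1) = edist x y

/-- A fibered-space structure on the subset `A` of a metric space (with the restriction
metric): a decomposition of `A` into closed fibers satisfying (F1)–(F4). -/
structure FiberedSet {X : Type*} [MetricSpace X] (A : Set X) where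
  ι : Type*
  F : ι → Set X
  subset : ∀ i, F i ⊆ A
  closed : ∀ i, IsClosed (Subtype.val ⁻¹' F i : Set A)
  covers : ⋃ i, F i = A
  /-- (F1) fibers are unbounded geodesic metric spaces -/
  geodesic : ∀ i, IsGeodesicSet (F i)
  unbounded : ∀ i, ¬ Bornology.IsBounded (F i)
  /-- (F2) distinct fibers have positive distance -/
  posDist : ∀ i j, i ≠ j → setEDist (F i) (F j) ≠ 0
  /-- (F3) non-parallel fibers diverge -/
  diverge : ∀ i j, i ≠ j → ¬ AreParallel (F i) (F j) →
    EMetric.hausdorffEdist (F i) (F j) = ⊤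
  /-- (F4) parallel fibers are not isolated -/
  notIsolated : ∀ i, ∃ seq : ℕ → ι, (∀ n, AreParallel (F (seq n)) (F i)) ∧
    Tendsto (fun n => setEDist (F (seq n)) (F i)) atTop (𝓝 0)

/-- `f` is (C,η)-quasisymmetric: η-quasisymmetric and there are points `p ≠ w` with
`C⁻¹ ≤ ρ(f p, f w)/d(p,w) ≤ C`. -/
def IsCQuasisymmetric {X Y : Type*} [MetricSpace X] [MetricSpace Y] (C : ℝ) (η : ℝ → ℝ)
    (f : X → Y) : Prop :=
  IsQuasisymmetric η f ∧ ∃ p w : X, p ≠ w ∧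
    C⁻¹ ≤ dist (f p) (f w) / dist p w ∧ dist (f p) (f w) / dist p w ≤ C
/-- A set has no isolated points. -/
def NoIsolated (A : Set ℝ) : Prop := ∀ x ∈ A, x ∈ closure (A \ {x})
namespace Helpers

/-- point of the plane. -/
def pt (a b : ℝ) : E2 := WithLp.toLp 2 ![a, b]

@[simp] lemma pt_zero (a b : ℝ) : pt a b 0 = a := rfl
@[simp] lemma pt_one (a b : ℝ) : pt a b 1 = b := rfl

/-- fiber over `y` with horizontal extent `I`. -/
def fib (I : Set ℝ) (y : ℝ) : Set E2 := {x : E2 | x 0 ∈ I ∧ x 1 = y}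

lemma mem_fib {I : Set ℝ} {y a b : ℝ} (ha : a ∈ I) (hb : b = y) :
    pt a b ∈ fib I y := ⟨ha, hb⟩

lemma coord_abs_le_dist (x p : E2) (i : Fin 2) : |x i - p i| ≤ dist x p := by
  rw [EuclideanSpace.dist_eq]
  have h1 : |x i - p i| = Real.sqrt (dist (x i) (p i) ^ 2) := by
    rw [Real.sqrt_sq_eq_abs, Real.dist_eq, abs_abs]
  rw [h1]
  apply Real.sqrt_le_sqrt
  exact Finset.single_le_sum (f := fun j => dist (x j) (p j) ^ 2)
    (fun j _ => sq_nonneg _) (Finset.mem_univ i)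

lemma dist_proj (x : E2) (y' : ℝ) : dist x (pt (x 0) y') = |x 1 - y'| := by
  rw [EuclideanSpace.dist_eq, Fin.sum_univ_two]
  simp only [pt_zero, pt_one, dist_self, Real.dist_eq]
  rw [show (0:ℝ)^2 + |x 1 - y'|^2 = |x 1 - y'|^2 by ring, Real.sqrt_sq_eq_abs, abs_abs]

lemma continuous_coord (i : Fin 2) : Continuous fun x : E2 => x i := by
  apply LipschitzWith.continuous (K := 1)
  apply LipschitzWith.of_dist_le_mul
  intro x p
  rw [Real.dist_eq]
  calc |x i - p i| ≤ dist x p := coord_abs_le_dist x p i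
    _ = (1:ℝ≥0) * dist x p := by simp

lemma fib_closed {I : Set ℝ} (hI : IsClosed I) (y : ℝ) : IsClosed (fib I y) := by
  have : fib I y = (fun x : E2 => x 0) ⁻¹' I ∩ (fun x : E2 => x 1) ⁻¹' {y} := by
    ext x; simp [fib]
  rw [this]
  exact (hI.preimage (continuous_coord 0)).inter
    (isClosed_singleton.preimage (continuous_coord 1))

lemma edist_coord_le (x p : E2) : edist (x 1) (p 1) ≤ edist x p := by
  rw [edist_dist, edist_dist]
  exact ENNReal.ofReal_le_ofReal (by rw [Real.dist_eq]; exact coord_abs_le_dist x p 1)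

lemma infEdist_fib {I : Set ℝ} {y : ℝ} {x : E2} (hx : x ∈ fib I y) (y' : ℝ) :
    EMetric.infEdist x (fib I y') = edist y y' := by
  apply le_antisymm
  · calc EMetric.infEdist x (fib I y') ≤ edist x (pt (x 0) y') :=
          EMetric.infEdist_le_edist_of_mem (mem_fib hx.1 rfl)
      _ = edist y y' := by rw [edist_dist, edist_dist, dist_proj, hx.2, Real.dist_eq]
  · rw [EMetric.infEdist, le_infEDist]
    intro p hp
    calc edist y y' = edist (x 1) (p 1) := by rw [hx.2, hp.2]
      _ ≤ edist x p := edist_coord_le x p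

lemma setEDist_fib_ge (I J : Set ℝ) (y y' : ℝ) :
    edist y y' ≤ setEDist (fib I y) (fib J y') := by
  refine le_iInf₂ fun x hx => ?_
  rw [EMetric.infEdist, le_infEDist]
  intro p hp
  calc edist y y' = edist (x 1) (p 1) := by rw [hx.2, hp.2]
    _ ≤ edist x p := edist_coord_le x p

lemma setEDist_fib_le {I : Set ℝ} (hI : I.Nonempty) (y y' : ℝ) :
    setEDist (fib I y) (fib I y') ≤ edist y y' := by
  obtain ⟨a, ha⟩ := hI
  calc setEDist (fib I y) (fib I y') ≤ EMetric.infEdist (pt a y) (fib I y') :=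
        iInf₂_le _ (mem_fib ha rfl)
    _ = edist y y' := infEdist_fib (mem_fib ha rfl) y'

lemma infDist_fib {I : Set ℝ} {y : ℝ} {x : E2} (hx : x ∈ fib I y) (y' : ℝ) :
    Metric.infDist x (fib I y') = |y - y'| := by
  rw [Metric.infDist, show infEDist x (fib I y') = EMetric.infEdist x (fib I y') from rfl,
    infEdist_fib hx y', edist_dist, ENNReal.toReal_ofReal dist_nonneg,
    Real.dist_eq]

lemma fib_parallel {I : Set ℝ} {y y' : ℝ} (h : y ≠ y') :
    AreParallel (fib I y) (fib I y') := by
  refine ⟨|y - y'|, abs_pos.2 (sub_ne_zero.2 h), fun x hx => infDist_fib hx y',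
    fun x hx => ?_⟩
  rw [infDist_fib hx y, abs_sub_comm]

lemma setEDist_fib_ne_zero {I J : Set ℝ} {y y' : ℝ} (h : y ≠ y') :
    setEDist (fib I y) (fib J y') ≠ 0 := by
  intro h0
  have := setEDist_fib_ge I J y y'
  rw [h0, le_zero_iff] at this
  exact h (edist_eq_zero.1 this)

lemma fib_geodesic {I : Set ℝ} (hI : Convex ℝ I) (y : ℝ) : IsGeodesicSet (fib I y) := by
  intro x hx z hz
  refine ⟨fun t => x + t • (z - x), ?_, ?_, ?_, ?_, ?_⟩
  · exact (continuous_const.add (continuous_id.smul continuous_const)).continuousOn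
  · intro t ht
    show x + t • (z - x) ∈ fib I y
    constructor
    · have h1 : (x + t • (z - x)) 0 = (1 - t) * x 0 + t * z 0 := by
        simp [PiLp.add_apply, PiLp.smul_apply, PiLp.sub_apply, smul_eq_mul]; ring
      rw [h1]
      exact hI hx.1 hz.1 (by linarith [ht.1, ht.2]) ht.1 (by ring)
    · have h1 : (x + t • (z - x)) 1 = x 1 + t * (z 1 - x 1) := by
        simp [PiLp.add_apply, PiLp.smul_apply, PiLp.sub_apply, smul_eq_mul]
      rw [h1, hx.2, hz.2]; ring
  · simp
  · simp
  · have lip : LipschitzWith ‖z - x‖₊ fun t : ℝ => x + t • (z - x) := by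
      apply LipschitzWith.of_dist_le_mul
      intro s t
      rw [dist_add_left, dist_eq_norm, ← sub_smul, norm_smul, Real.norm_eq_abs,
        ← Real.dist_eq, Real.dist_eq, coe_nnnorm]
      ring_nf
      rw [mul_comm]
    apply le_antisymm
    · have lipOn : LipschitzOnWith ‖z - x‖₊ (fun t : ℝ => x + t • (z - x)) (Set.Icc 0 1) :=
        lip.lipschitzOnWith
      have h1 : eVariationOn (fun t : ℝ => x + t • (z - x)) (Set.Icc 0 1) ≤
          ‖z - x‖₊ * eVariationOn id (Set.Icc (0:ℝ) 1) :=
        lipOn.comp_eVariationOn_le (Set.mapsTo_id _)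
      have h2 : eVariationOn id (Set.Icc (0:ℝ) 1) ≤ ENNReal.ofReal 1 := by
        have h3 := (monotoneOn_id (s := Set.Icc (0:ℝ) 1)).eVariationOn_le
          (Set.left_mem_Icc.2 zero_le_one) (Set.right_mem_Icc.2 zero_le_one)
        simpa using h3
      calc eVariationOn (fun t : ℝ => x + t • (z - x)) (Set.Icc 0 1) ≤
            ‖z - x‖₊ * ENNReal.ofReal 1 := h1.trans (mul_le_mul_right h2 _)
        _ = ‖z - x‖₊ := by simp
        _ = edist x z := by rw [edist_comm, edist_nndist, nndist_eq_nnnorm]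
    · have h1 := eVariationOn.edist_le (fun t : ℝ => x + t • (z - x))
        (Set.left_mem_Icc.2 (zero_le_one (α := ℝ))) (Set.right_mem_Icc.2 zero_le_one)
      simpa using h1

lemma fib_unbounded {I : Set ℝ} {y : ℝ} (h : ∀ r : ℝ, ∃ a b, a ∈ I ∧ b ∈ I ∧ r ≤ |a - b|) :
    ¬ Bornology.IsBounded (fib I y) := by
  intro hb
  obtain ⟨C, hC⟩ := Metric.isBounded_iff.1 hb
  obtain ⟨a, b, ha, hb', hab⟩ := h (C + 1)
  have hd := hC (mem_fib ha rfl) (mem_fib (y := y) hb' rfl)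
  have h2 : |a - b| ≤ dist (pt a y) (pt b y) := by
    have := coord_abs_le_dist (pt a y) (pt b y) 0
    simpa using this
  linarith

lemma cross_diverge (w y y' : ℝ) :
    EMetric.hausdorffEdist (fib (Iic w) y) (fib (Ici w) y') = ⊤ := by
  apply ENNReal.eq_top_of_forall_nnreal_le
  intro r
  have hx : pt (w - r) y ∈ fib (Iic w) y := mem_fib (by simp [r.coe_nonneg]) rfl
  calc (r : ℝ≥0∞) ≤ EMetric.infEdist (pt (w - (r:ℝ)) y) (fib (Ici w) y') := by
        rw [EMetric.infEdist, le_infEDist]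
        intro p hp
        rw [edist_dist, ← ENNReal.ofReal_coe_nnreal]
        apply ENNReal.ofReal_le_ofReal
        have h1 := coord_abs_le_dist (pt (w - (r:ℝ)) y) p 0
        have h3 : w ≤ p 0 := hp.1
        rw [pt_zero] at h1
        calc (r : ℝ) ≤ |w - r - p 0| := by
              rw [abs_sub_comm]
              calc (r : ℝ) ≤ p 0 - (w - r) := by linarith
                _ ≤ |p 0 - (w - r)| := le_abs_self _
          _ ≤ dist (pt (w - (r:ℝ)) y) p := h1
    _ ≤ EMetric.hausdorffEdist (fib (Iic w) y) (fib (Ici w) y') :=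
        EMetric.infEdist_le_hausdorffEdist_of_mem hx

lemma noIsolated_inter_open {A U : Set ℝ} (hA : NoIsolated A) (hU : IsOpen U) :
    NoIsolated (A ∩ U) := by
  intro x hx
  have h1 := hA x hx.1
  rw [mem_closure_iff_nhds] at h1 ⊢
  intro t ht
  obtain ⟨y, hy1, hy2⟩ := h1 (t ∩ U) (Filter.inter_mem ht (hU.mem_nhds hx.2))
  exact ⟨y, hy1.1, ⟨⟨hy2.1, hy1.2⟩, hy2.2⟩⟩

lemma fib_univ (y : ℝ) : fib univ y = {x : E2 | x 1 = y} := by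
  ext x; simp [fib]

lemma fib_F4 {I : Set ℝ} (hIne : I.Nonempty) {A : Set ℝ} (hA : NoIsolated A) {y : ℝ}
    (hy : y ∈ A) :
    ∃ z : ℕ → ℝ, (∀ n, z n ∈ A ∧ z n ≠ y) ∧
      (∀ n, AreParallel (fib I (z n)) (fib I y)) ∧
      Tendsto (fun n => setEDist (fib I (z n)) (fib I y)) atTop (𝓝 0) := by
  have h1 := hA y hy
  rw [Metric.mem_closure_iff] at h1
  have h2 : ∀ n : ℕ, ∃ b, b ∈ A \ {y} ∧ dist y b < 1 / (n + 1) := fun n =>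
    h1 _ (by positivity)
  choose z hz hzd using h2
  have hne : ∀ n, z n ≠ y := fun n he => (hz n).2 (by simp [he])
  refine ⟨z, fun n => ⟨(hz n).1, hne n⟩, fun n => fib_parallel (hne n), ?_⟩
  refine tendsto_of_tendsto_of_tendsto_of_le_of_le (g := fun _ : ℕ => (0:ℝ≥0∞))
    (h := fun n : ℕ => ENNReal.ofReal (1 / (n + 1))) tendsto_const_nhds ?_
    (fun n => zero_le) ?_
  · have := ENNReal.tendsto_ofReal tendsto_one_div_add_atTop_nhds_zero_nat
    simpa using this
  · intro n
    refine (setEDist_fib_le hIne _ _).trans ?_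
    rw [edist_dist]
    exact ENNReal.ofReal_le_ofReal (by rw [dist_comm]; exact (hzd n).le)

end Helpers

/-- Properties of the decomposition used in the proof of Theorem A: given closed sets
`C_left`, `C_right` in ℝ without isolated points and `w ∈ ℝ`, the sets
`T_left = C_left \ C_right`, `T_right = C_right \ C_left`, `T = C_left ∩ C_right` and
`S = T \ cl(T_left ∪ T_right)` satisfy: (i) `T_left`, `T_right`, `S` have no isolated
points; (ii) `(-∞,w] × T_left ∪ [w,∞) × T_right` is a fibered space with the obvious
fibers; (iii) `ℝ × S` is a fibered space with fibers `ℝ × {y}`; (iv) `S ∪ T_left ∪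
T_right` is dense in `C_left ∪ C_right`. -/
theorem statement17 (Cl Cr : Set ℝ) (hClc : IsClosed Cl) (hCrc : IsClosed Cr)
    (hClni : NoIsolated Cl) (hCrni : NoIsolated Cr) (w : ℝ) :
    NoIsolated (Cl \ Cr) ∧ NoIsolated (Cr \ Cl) ∧
    NoIsolated ((Cl ∩ Cr) \ closure ((Cl \ Cr) ∪ (Cr \ Cl))) ∧
    (((Cl \ Cr) ∪ (Cr \ Cl)).Nonempty →
      ∃ FS : FiberedSet ({x : E2 | x 0 ≤ w ∧ x 1 ∈ Cl \ Cr} ∪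
          {x : E2 | w ≤ x 0 ∧ x 1 ∈ Cr \ Cl}),
        Set.range FS.F =
          {s : Set E2 | (∃ y ∈ Cl \ Cr, s = {x : E2 | x 0 ≤ w ∧ x 1 = y}) ∨
            (∃ y ∈ Cr \ Cl, s = {x : E2 | w ≤ x 0 ∧ x 1 = y})}) ∧
    (((Cl ∩ Cr) \ closure ((Cl \ Cr) ∪ (Cr \ Cl))).Nonempty →
      ∃ FS : FiberedSet {x : E2 | x 1 ∈ (Cl ∩ Cr) \ closure ((Cl \ Cr) ∪ (Cr \ Cl))},
        Set.range FS.F =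
          {s : Set E2 | ∃ y ∈ (Cl ∩ Cr) \ closure ((Cl \ Cr) ∪ (Cr \ Cl)),
            s = {x : E2 | x 1 = y}}) ∧
    (Cl ∪ Cr ⊆ closure (((Cl ∩ Cr) \ closure ((Cl \ Cr) ∪ (Cr \ Cl))) ∪
      (Cl \ Cr) ∪ (Cr \ Cl))) := by
  have hTlni : NoIsolated (Cl \ Cr) := by
    rw [diff_eq]
    exact Helpers.noIsolated_inter_open hClni hCrc.isOpen_compl
  have hTrni : NoIsolated (Cr \ Cl) := by
    rw [diff_eq]
    exact Helpers.noIsolated_inter_open hCrni hClc.isOpen_compl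
  have hSeq : (Cl ∩ Cr) \ closure ((Cl \ Cr) ∪ (Cr \ Cl)) =
      Cl ∩ (closure ((Cl \ Cr) ∪ (Cr \ Cl)))ᶜ := by
    ext x
    simp only [mem_diff, mem_inter_iff, mem_compl_iff]
    constructor
    · rintro ⟨⟨h1, _⟩, h3⟩; exact ⟨h1, h3⟩
    · rintro ⟨h1, h3⟩
      refine ⟨⟨h1, ?_⟩, h3⟩
      by_contra h2
      exact h3 (subset_closure (Or.inl ⟨h1, h2⟩))
  have hSni : NoIsolated ((Cl ∩ Cr) \ closure ((Cl \ Cr) ∪ (Cr \ Cl))) := by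
    rw [hSeq]
    exact Helpers.noIsolated_inter_open hClni isClosed_closure.isOpen_compl
  refine ⟨hTlni, hTrni, hSni, ?_, ?_, ?_⟩
  · -- part (ii)
    intro _
    refine ⟨FiberedSet.mk (ULift (Sum ↥(Cl \ Cr) ↥(Cr \ Cl)))
      (fun i => Sum.elim (fun y : ↥(Cl \ Cr) => Helpers.fib (Iic w) ↑y)
        (fun y : ↥(Cr \ Cl) => Helpers.fib (Ici w) ↑y) i.down)
      ?_ ?_ ?_ ?_ ?_ ?_ ?_ ?_, ?_⟩
    · rintro ⟨a | a⟩ x hx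
      · exact Or.inl ⟨hx.1, by rw [hx.2]; exact a.2⟩
      · exact Or.inr ⟨hx.1, by rw [hx.2]; exact a.2⟩
    · rintro ⟨a | a⟩
      · exact (Helpers.fib_closed isClosed_Iic _).preimage continuous_subtype_val
      · exact (Helpers.fib_closed isClosed_Ici _).preimage continuous_subtype_val
    · apply subset_antisymm
      · apply iUnion_subset
        rintro ⟨a | a⟩ x hx
        · exact Or.inl ⟨hx.1, by rw [hx.2]; exact a.2⟩
        · exact Or.inr ⟨hx.1, by rw [hx.2]; exact a.2⟩
      · rintro x (⟨h1, h2⟩ | ⟨h1, h2⟩)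
        · exact mem_iUnion.2 ⟨ULift.up (Sum.inl ⟨x 1, h2⟩), ⟨h1, rfl⟩⟩
        · exact mem_iUnion.2 ⟨ULift.up (Sum.inr ⟨x 1, h2⟩), ⟨h1, rfl⟩⟩
    · rintro ⟨a | a⟩
      · exact Helpers.fib_geodesic (convex_Iic w) _
      · exact Helpers.fib_geodesic (convex_Ici w) _
    · rintro ⟨a | a⟩
      · apply Helpers.fib_unbounded
        intro r
        refine ⟨w - |r|, w, by simp [abs_nonneg], by simp, ?_⟩
        have h : w - |r| - w = -|r| := by ring
        rw [h, abs_neg, abs_abs]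
        exact le_abs_self r
      · apply Helpers.fib_unbounded
        intro r
        refine ⟨w + |r|, w, by simp [abs_nonneg], by simp, ?_⟩
        have h : w + |r| - w = |r| := by ring
        rw [h, abs_abs]
        exact le_abs_self r
    · rintro ⟨a | a⟩ ⟨b | b⟩ hij
      · exact Helpers.setEDist_fib_ne_zero
          (fun h => hij (congrArg ULift.up (congrArg Sum.inl (Subtype.ext h))))
      · exact Helpers.setEDist_fib_ne_zero (fun h => a.2.2 (h ▸ b.2.1))
      · exact Helpers.setEDist_fib_ne_zero (fun h => b.2.2 (h.symm ▸ a.2.1))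
      · exact Helpers.setEDist_fib_ne_zero
          (fun h => hij (congrArg ULift.up (congrArg Sum.inr (Subtype.ext h))))
    · rintro ⟨a | a⟩ ⟨b | b⟩ hij hnp
      · exact absurd (Helpers.fib_parallel
          (fun h => hij (congrArg ULift.up (congrArg Sum.inl (Subtype.ext h))))) hnp
      · exact Helpers.cross_diverge w a b
      · rw [EMetric.hausdorffEdist, hausdorffEDist_comm]
        exact Helpers.cross_diverge w b a
      · exact absurd (Helpers.fib_parallel
          (fun h => hij (congrArg ULift.up (congrArg Sum.inr (Subtype.ext h))))) hnp
    · rintro ⟨a | a⟩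
      · obtain ⟨z, hz1, hz2, hz3⟩ :=
          Helpers.fib_F4 (I := Iic w) ⟨w, Set.self_mem_Iic⟩ hTlni a.2
        exact ⟨fun n => ULift.up (Sum.inl ⟨z n, (hz1 n).1⟩), hz2, hz3⟩
      · obtain ⟨z, hz1, hz2, hz3⟩ :=
          Helpers.fib_F4 (I := Ici w) ⟨w, Set.self_mem_Ici⟩ hTrni a.2
        exact ⟨fun n => ULift.up (Sum.inr ⟨z n, (hz1 n).1⟩), hz2, hz3⟩
    · ext s
      simp only [Set.mem_range, Set.mem_setOf_eq]
      constructor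
      · rintro ⟨⟨a | a⟩, rfl⟩
        · exact Or.inl ⟨a, a.2, rfl⟩
        · exact Or.inr ⟨a, a.2, rfl⟩
      · rintro (⟨y, hy, rfl⟩ | ⟨y, hy, rfl⟩)
        · exact ⟨ULift.up (Sum.inl ⟨y, hy⟩), rfl⟩
        · exact ⟨ULift.up (Sum.inr ⟨y, hy⟩), rfl⟩
  · -- part (iii)
    intro _
    refine ⟨FiberedSet.mk (ULift ↥((Cl ∩ Cr) \ closure ((Cl \ Cr) ∪ (Cr \ Cl))))
      (fun i => Helpers.fib univ (i.down : ℝ))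
      ?_ ?_ ?_ ?_ ?_ ?_ ?_ ?_, ?_⟩
    · rintro ⟨a⟩ x hx
      show x 1 ∈ (Cl ∩ Cr) \ closure ((Cl \ Cr) ∪ (Cr \ Cl))
      rw [hx.2]
      exact a.2
    · rintro ⟨a⟩
      exact (Helpers.fib_closed isClosed_univ _).preimage continuous_subtype_val
    · apply subset_antisymm
      · apply iUnion_subset
        rintro ⟨a⟩ x hx
        show x 1 ∈ (Cl ∩ Cr) \ closure ((Cl \ Cr) ∪ (Cr \ Cl))
        rw [hx.2]
        exact a.2
      · intro x hx
        exact mem_iUnion.2 ⟨ULift.up ⟨x 1, hx⟩, ⟨trivial, rfl⟩⟩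
    · rintro ⟨a⟩
      exact Helpers.fib_geodesic convex_univ _
    · rintro ⟨a⟩
      apply Helpers.fib_unbounded
      intro r
      refine ⟨|r|, 0, trivial, trivial, ?_⟩
      rw [sub_zero, abs_abs]
      exact le_abs_self r
    · rintro ⟨a⟩ ⟨b⟩ hij
      exact Helpers.setEDist_fib_ne_zero
        (fun h => hij (congrArg ULift.up (Subtype.ext h)))
    · rintro ⟨a⟩ ⟨b⟩ hij hnp
      exact absurd (Helpers.fib_parallel
        (fun h => hij (congrArg ULift.up (Subtype.ext h)))) hnp
    · rintro ⟨a⟩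
      obtain ⟨z, hz1, hz2, hz3⟩ :=
        Helpers.fib_F4 (I := univ) ⟨0, trivial⟩ hSni a.2
      exact ⟨fun n => ULift.up ⟨z n, (hz1 n).1⟩, hz2, hz3⟩
    · ext s
      simp only [Set.mem_range, Set.mem_setOf_eq]
      constructor
      · rintro ⟨⟨a⟩, rfl⟩
        exact ⟨a, a.2, Helpers.fib_univ _⟩
      · rintro ⟨y, hy, rfl⟩
        exact ⟨ULift.up ⟨y, hy⟩, (Helpers.fib_univ _).symm ▸ rfl⟩
  · -- part (iv)
    intro x hx
    have hsub : (Cl \ Cr) ∪ (Cr \ Cl) ⊆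
        ((Cl ∩ Cr) \ closure ((Cl \ Cr) ∪ (Cr \ Cl))) ∪ (Cl \ Cr) ∪ (Cr \ Cl) := by
      rintro z (hz | hz)
      · exact Or.inl (Or.inr hz)
      · exact Or.inr hz
    have key : ∀ v : ℝ, v ∈ Cl → v ∈ Cr → v ∈ closure
        (((Cl ∩ Cr) \ closure ((Cl \ Cr) ∪ (Cr \ Cl))) ∪ (Cl \ Cr) ∪ (Cr \ Cl)) := by
      intro v h1 h2
      by_cases hcl : v ∈ closure ((Cl \ Cr) ∪ (Cr \ Cl))
      · exact closure_mono hsub hcl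
      · exact subset_closure (Or.inl (Or.inl ⟨⟨h1, h2⟩, hcl⟩))
    rcases hx with h | h
    · by_cases hc : x ∈ Cr
      · exact key x h hc
      · exact subset_closure (Or.inl (Or.inr ⟨h, hc⟩))
    · by_cases hc : x ∈ Cl
      · exact key x hc h
      · exact subset_closure (Or.inr ⟨h, hc⟩)
end
end
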